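/- Let B, U be positive integers, A ∈ ℂ^{U×B}, δ > 0, ℓ > 0, and let B_ℓ = {x ∈ ℂ^B : |Re(x_b)| ≤ ℓ and |Im(x_b)| ≤ ℓ for all b}. Define f(x) = (1/2)‖A x‖₂², g(x) = −(δ/2)‖x‖₂², and E(x) = f(x) + g(x). Let τ > 0 satisfy τ·‖Aᴴ A‖₂,₂ < 1 and τδ < 1, and let (x^{(t)}) be a sequence in B_ℓ with x^{(t+1)} minimizing x ↦ g(x) + Re⟨Aᴴ A x^{(t)}, x − x^{(t)}⟩ + (1/(2τ))‖x − x^{(t)}‖₂² over x ∈ B_ℓ for every t ≥ 1. If x* is a limit point of (x^{(t)}), then x* minimizes the surrogate at itself, i.e., x* minimizes x ↦ g(x) + Re⟨Aᴴ A x*, x − x*⟩ + (1/(2τ))‖x − x*‖₂² over x ∈ B_ℓ; equivalently, x* is a fixed point of the C2PO iteration and hence a stationary point of E on B_ℓ. -/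

import Mathlib

open Matrix BigOperators

/-- The proximal surrogate minimized at each C2PO iteration, based at y:
g(x) + Re⟨Aᴴ A y, x − y⟩ + (1/(2τ))‖x − y‖₂², with g(x) = −(δ/2)‖x‖₂². -/
noncomputable def c2poSurrogate {B U : ℕ} (A : Matrix (Fin U) (Fin B) ℂ) (δ τ : ℝ)
    (y x : Fin B → ℂ) : ℝ :=
  -(δ / 2) * (∑ b, ‖x b‖ ^ 2) + (star ((Aᴴ * A).mulVec y) ⬝ᵥ (x - y)).re
    + (1 / (2 * τ)) * (∑ b, ‖x b - y b‖ ^ 2)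

/-- The convex envelope B_ℓ = {x ∈ ℂ^B : |Re x_b| ≤ ℓ, |Im x_b| ≤ ℓ}. -/
def boxSet (B : ℕ) (ℓ : ℝ) : Set (Fin B → ℂ) :=
  {x | ∀ b, |(x b).re| ≤ ℓ ∧ |(x b).im| ≤ ℓ}

lemma quad_rw {B U : ℕ} (A : Matrix (Fin U) (Fin B) ℂ) (x : Fin B → ℂ) :
    star x ⬝ᵥ (Aᴴ * A) *ᵥ x = star (A *ᵥ x) ⬝ᵥ (A *ᵥ x) := by
  rw [← Matrix.mulVec_mulVec, Matrix.dotProduct_mulVec, ← Matrix.star_mulVec]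

lemma dot_star_self_re {n : ℕ} (v : Fin n → ℂ) :
    (star v ⬝ᵥ v).re = ∑ i, ‖v i‖ ^ 2 := by
  simp only [dotProduct, Complex.re_sum, Pi.star_apply, Complex.star_def]
  refine Finset.sum_congr rfl fun i _ => ?_
  rw [Complex.sq_norm]
  simp [Complex.normSq_apply, Complex.mul_re]

lemma quad_expand {B U : ℕ} (A : Matrix (Fin U) (Fin B) ℂ) (y d : Fin B → ℂ) :
    (star (y + d) ⬝ᵥ (Aᴴ * A) *ᵥ (y + d)).re
      = (star y ⬝ᵥ (Aᴴ * A) *ᵥ y).re + 2 * (star ((Aᴴ * A) *ᵥ y) ⬝ᵥ d).re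
        + (star d ⬝ᵥ (Aᴴ * A) *ᵥ d).re := by
  have hM : (Aᴴ * A)ᴴ = Aᴴ * A := by simp [Matrix.conjTranspose_mul]
  have h1 : star y ⬝ᵥ (Aᴴ * A) *ᵥ d = star ((Aᴴ * A) *ᵥ y) ⬝ᵥ d := by
    rw [Matrix.star_mulVec, hM, Matrix.dotProduct_mulVec]
  have h2 : star d ⬝ᵥ (Aᴴ * A) *ᵥ y = star (star ((Aᴴ * A) *ᵥ y) ⬝ᵥ d) :=
    Matrix.star_dotProduct d _
  simp only [star_add, Matrix.mulVec_add, add_dotProduct, dotProduct_add,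
    Complex.add_re, h1, h2, Complex.star_def, Complex.conj_re]
  ring

lemma quad_le_opNorm {B : ℕ} (M : Matrix (Fin B) (Fin B) ℂ) (d : Fin B → ℂ) :
    (star d ⬝ᵥ M *ᵥ d).re ≤ ‖Matrix.toEuclideanCLM (𝕜 := ℂ) M‖ * ∑ b, ‖d b‖ ^ 2 := by
  set T := Matrix.toEuclideanCLM (𝕜 := ℂ) M
  set u : EuclideanSpace ℂ (Fin B) := (WithLp.equiv 2 (Fin B → ℂ)).symm d
  have hTu : T u = (WithLp.equiv 2 (Fin B → ℂ)).symm (M *ᵥ d) := by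
    rfl
  have hinner : (inner ℂ u (T u) : ℂ) = star d ⬝ᵥ M *ᵥ d := by
    rw [hTu, dotProduct_comm]; rfl
  have hnorm : ‖u‖ ^ 2 = ∑ b, ‖d b‖ ^ 2 := by
    rw [EuclideanSpace.norm_eq]
    refine Real.sq_sqrt (Finset.sum_nonneg fun b _ => sq_nonneg _)
  have h1 : (star d ⬝ᵥ M *ᵥ d).re ≤ ‖(inner ℂ u (T u) : ℂ)‖ := by
    rw [hinner]; exact Complex.re_le_norm _
  calc (star d ⬝ᵥ M *ᵥ d).re ≤ ‖(inner ℂ u (T u) : ℂ)‖ := h1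
    _ ≤ ‖u‖ * ‖T u‖ := norm_inner_le_norm _ _
    _ ≤ ‖u‖ * (‖T‖ * ‖u‖) := mul_le_mul_of_nonneg_left (T.le_opNorm u) (norm_nonneg _)
    _ = ‖T‖ * ∑ b, ‖d b‖ ^ 2 := by rw [← hnorm]; ring

lemma surr_cont {B U : ℕ} (A : Matrix (Fin U) (Fin B) ℂ) (δ τ : ℝ) :
    Continuous fun p : (Fin B → ℂ) × (Fin B → ℂ) => c2poSurrogate A δ τ p.1 p.2 := by
  unfold c2poSurrogate
  simp only [Matrix.mulVec, dotProduct, Pi.star_apply, Pi.sub_apply, Complex.re_sum]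
  fun_prop

set_option maxHeartbeats 1000000 in
set_option synthInstance.maxHeartbeats 400000 in
/-- Theorem 2, stationarity: any limit point x* of the C2PO
iterates minimizes the surrogate based at itself over B_ℓ, i.e., x* is a fixed
point of the C2PO iteration. -/
theorem stmt_14 (B U : ℕ) (hB : 0 < B) (hU : 0 < U)
    (A : Matrix (Fin U) (Fin B) ℂ) (δ ℓ τ : ℝ)
    (hδ : 0 < δ) (hℓ : 0 < ℓ) (hτ : 0 < τ)
    (hτA : τ * ‖Matrix.toEuclideanCLM (𝕜 := ℂ) (Aᴴ * A)‖ < 1) (hτδ : τ * δ < 1)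
    (xseq : ℕ → Fin B → ℂ)
    (hmem : ∀ t, xseq t ∈ boxSet B ℓ)
    (hmin : ∀ t ≥ 1, ∀ x ∈ boxSet B ℓ,
      c2poSurrogate A δ τ (xseq t) (xseq (t + 1))
        ≤ c2poSurrogate A δ τ (xseq t) x)
    (xstar : Fin B → ℂ)
    (hlim : ∃ φ : ℕ → ℕ, StrictMono φ ∧
      Filter.Tendsto (fun k => xseq (φ k)) Filter.atTop (nhds xstar)) :
    ∀ x ∈ boxSet B ℓ,
      c2poSurrogate A δ τ xstar xstar ≤ c2poSurrogate A δ τ xstar x := by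
  obtain ⟨φ, hφ, hφlim⟩ := hlim
  set L : ℝ := ‖Matrix.toEuclideanCLM (𝕜 := ℂ) (Aᴴ * A)‖ with hL
  have hL0 : 0 ≤ L := norm_nonneg _
  set c : ℝ := 1 / (2 * τ) - L / 2 with hc
  have hcpos : 0 < c := by
    have : L < 1 / τ := by
      rw [lt_div_iff₀ hτ]; linarith [hτA, mul_comm τ L]
    rw [hc]
    have h2 : 1 / (2 * τ) = (1 / τ) / 2 := by field_simp
    rw [h2]; linarith
  -- energy
  set Efun : (Fin B → ℂ) → ℝ :=
    fun x => (1 / 2) * (star x ⬝ᵥ (Aᴴ * A) *ᵥ x).re - (δ / 2) * ∑ b, ‖x b‖ ^ 2 with hEfun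
  set D : ℕ → ℝ := fun t => ∑ b, ‖xseq (t + 1) b - xseq t b‖ ^ 2 with hD
  have hDnn : ∀ t, 0 ≤ D t := fun t => Finset.sum_nonneg fun b _ => sq_nonneg _
  -- descent
  have hdesc : ∀ t, 1 ≤ t → Efun (xseq (t + 1)) + c * D t ≤ Efun (xseq t) := by
    intro t ht
    set y := xseq t
    set z := xseq (t + 1)
    have hyz : y + (z - y) = z := by abel
    have hS := hmin t ht y (hmem t)
    have hSyy : c2poSurrogate A δ τ y y = -(δ / 2) * ∑ b, ‖y b‖ ^ 2 := by
      simp only [c2poSurrogate, sub_self, dotProduct_zero, Complex.zero_re, add_zero,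
        norm_zero, Pi.sub_apply, zero_pow, ne_eq, OfNat.ofNat_ne_zero, not_false_eq_true,
        Finset.sum_const_zero, mul_zero]
    rw [hSyy] at hS
    unfold c2poSurrogate at hS
    have hq : (star z ⬝ᵥ (Aᴴ * A) *ᵥ z).re
        = (star y ⬝ᵥ (Aᴴ * A) *ᵥ y).re + 2 * (star ((Aᴴ * A) *ᵥ y) ⬝ᵥ (z - y)).re
          + (star (z - y) ⬝ᵥ (Aᴴ * A) *ᵥ (z - y)).re := by
      conv_lhs => rw [← hyz]
      exact quad_expand A y (z - y)
    have hqd : (star (z - y) ⬝ᵥ (Aᴴ * A) *ᵥ (z - y)).re ≤ L * D t := by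
      have h := quad_le_opNorm (Aᴴ * A) (z - y)
      have hsum : (∑ b, ‖(z - y) b‖ ^ 2) = D t := by
        rw [hD]
        exact Finset.sum_congr rfl fun b _ => rfl
      rw [hsum] at h
      rw [hL]
      exact h
    have hDt : ∑ b, ‖z b - y b‖ ^ 2 = D t := rfl
    rw [hDt] at hS
    simp only [hEfun, hq, hc]
    have hmv : (Aᴴ * A).mulVec y = (Aᴴ * A) *ᵥ y := rfl
    rw [hmv] at hS
    nlinarith [hS, hqd, hDnn t]
  -- lower bound for Efun on the box
  have hlb : ∀ t, -(δ / 2) * (B * (2 * ℓ ^ 2)) ≤ Efun (xseq t) := by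
    intro t
    have hq0 : 0 ≤ (star (xseq t) ⬝ᵥ (Aᴴ * A) *ᵥ xseq t).re := by
      rw [quad_rw, dot_star_self_re]
      exact Finset.sum_nonneg fun u _ => sq_nonneg _
    have hsum : ∑ b, ‖xseq t b‖ ^ 2 ≤ B * (2 * ℓ ^ 2) := by
      have : ∀ b : Fin B, ‖xseq t b‖ ^ 2 ≤ 2 * ℓ ^ 2 := by
        intro b
        obtain ⟨hre, him⟩ := hmem t b
        have h1 : (xseq t b).re ^ 2 ≤ ℓ ^ 2 := by nlinarith [abs_nonneg (xseq t b).re, sq_abs (xseq t b).re]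
        have h2 : (xseq t b).im ^ 2 ≤ ℓ ^ 2 := by nlinarith [abs_nonneg (xseq t b).im, sq_abs (xseq t b).im]
        have : ‖xseq t b‖ ^ 2 = (xseq t b).re ^ 2 + (xseq t b).im ^ 2 := by
          rw [Complex.sq_norm]
          simp [Complex.normSq_apply, sq]
        linarith
      calc ∑ b, ‖xseq t b‖ ^ 2 ≤ ∑ _b : Fin B, (2 * ℓ ^ 2) :=
            Finset.sum_le_sum fun b _ => this b
        _ = B * (2 * ℓ ^ 2) := by simp [Finset.sum_const, mul_comm]
    have hδ2 : 0 ≤ δ / 2 := by linarith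
    simp only [hEfun]
    nlinarith
  -- the energy sequence converges
  set e : ℕ → ℝ := fun n => Efun (xseq (n + 1)) with he
  have hanti : Antitone e := by
    refine antitone_nat_of_succ_le fun n => ?_
    have := hdesc (n + 1) (by omega)
    have h0 : 0 ≤ c * D (n + 1) := mul_nonneg hcpos.le (hDnn _)
    simp only [he]
    linarith
  have hbdd : BddBelow (Set.range e) := by
    refine ⟨-(δ / 2) * (B * (2 * ℓ ^ 2)), ?_⟩
    rintro _ ⟨n, rfl⟩
    exact hlb (n + 1)
  have hetend : Filter.Tendsto e Filter.atTop (nhds (⨅ n, e n)) :=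
    tendsto_atTop_ciInf hanti hbdd
  have hetend' : Filter.Tendsto (fun n => e (n + 1)) Filter.atTop (nhds (⨅ n, e n)) :=
    (Filter.tendsto_add_atTop_iff_nat 1).mpr hetend
  have hdiff : Filter.Tendsto (fun n => e n - e (n + 1)) Filter.atTop (nhds 0) := by
    have := hetend.sub hetend'
    simpa using this
  -- D (n+1) → 0
  have hDsq : Filter.Tendsto (fun n => D (n + 1)) Filter.atTop (nhds 0) := by
    have hub : ∀ n, c * D (n + 1) ≤ e n - e (n + 1) := by
      intro n
      have := hdesc (n + 1) (by omega)
      simp only [he]; linarith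
    have hsq : Filter.Tendsto (fun n => c * D (n + 1)) Filter.atTop (nhds 0) := by
      refine tendsto_of_tendsto_of_tendsto_of_le_of_le tendsto_const_nhds hdiff
        (fun n => mul_nonneg hcpos.le (hDnn _)) hub
    have h' : Filter.Tendsto (fun n => (1 / c) * (c * D (n + 1))) Filter.atTop (nhds 0) := by
      simpa using hsq.const_mul (1 / c)
    have heq : ∀ n, (1 / c) * (c * D (n + 1)) = D (n + 1) := by
      intro n; field_simp
    exact Filter.Tendsto.congr heq h'
  have hDtend : Filter.Tendsto D Filter.atTop (nhds 0) :=
    (Filter.tendsto_add_atTop_iff_nat 1).mp hDsq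
  -- coordinatewise differences go to 0
  have hΔ : ∀ b, Filter.Tendsto (fun t => xseq (t + 1) b - xseq t b) Filter.atTop (nhds 0) := by
    intro b
    rw [tendsto_zero_iff_norm_tendsto_zero]
    have hle : ∀ t, ‖xseq (t + 1) b - xseq t b‖ ^ 2 ≤ D t := by
      intro t
      exact Finset.single_le_sum (fun i _ => sq_nonneg (‖xseq (t + 1) i - xseq t i‖))
        (Finset.mem_univ b)
    have hsqt : Filter.Tendsto (fun t => ‖xseq (t + 1) b - xseq t b‖ ^ 2)
        Filter.atTop (nhds 0) :=
      tendsto_of_tendsto_of_tendsto_of_le_of_le tendsto_const_nhds hDtend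
        (fun t => sq_nonneg _) hle
    have : Filter.Tendsto (fun t => Real.sqrt (‖xseq (t + 1) b - xseq t b‖ ^ 2))
        Filter.atTop (nhds 0) := by
      have h0 : Real.sqrt 0 = 0 := Real.sqrt_zero
      exact h0 ▸ (Real.continuous_sqrt.tendsto 0).comp hsqt
    simpa [Real.sqrt_sq (norm_nonneg _)] using this
  -- the shifted subsequence also converges to xstar
  have hz : Filter.Tendsto (fun k => xseq (φ k + 1)) Filter.atTop (nhds xstar) := by
    rw [tendsto_pi_nhds]
    intro b
    have h1 : Filter.Tendsto (fun k => xseq (φ k) b) Filter.atTop (nhds (xstar b)) :=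
      (tendsto_pi_nhds.mp hφlim) b
    have h2 : Filter.Tendsto (fun k => xseq (φ k + 1) b - xseq (φ k) b)
        Filter.atTop (nhds 0) :=
      (hΔ b).comp hφ.tendsto_atTop
    have := h1.add h2
    simpa using this
  -- pass to the limit in the surrogate inequality
  intro x hx
  have hcont := surr_cont A δ τ
  have hpair1 : Filter.Tendsto (fun k => (xseq (φ k), xseq (φ k + 1)))
      Filter.atTop (nhds (xstar, xstar)) := hφlim.prodMk_nhds hz
  have hT1 := (hcont.tendsto (xstar, xstar)).comp hpair1
  simp only [Function.comp_def] at hT1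
  have hpair2 : Filter.Tendsto (fun k => (xseq (φ k), x))
      Filter.atTop (nhds (xstar, x)) := hφlim.prodMk_nhds tendsto_const_nhds
  have hT2 := (hcont.tendsto (xstar, x)).comp hpair2
  simp only [Function.comp_def] at hT2
  refine le_of_tendsto_of_tendsto hT1 hT2 ?_
  filter_upwards [Filter.eventually_ge_atTop 1] with k hk
  exact hmin (φ k) (le_trans hk (hφ.le_apply)) x hx
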